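/- Let g be a non-abelian complex Lie algebra and ω̄¹,…,ω̄^m a basis of the annihilator of [g,g] (conjugated). Suppose some ω̄^i ∧ ω̄^j (i < j) does not lie in a given subspace B ⊆ Λ²ḡ*. Then there exists a choice of scalars t with Φ₁ = Σ t_p^q ω̄^p ⊗ X_q such that [Φ₁, Φ₁] ∉ B ⊗ g; specifically, choosing k < l with [X_k, X_l] ≠ 0 and t supported on indices {i,j} × {k,l} with nonzero 2×2 determinant yields [Φ₁,Φ₁] = 2·det·ω̄^i ∧ ω̄^j ⊗ [X_k,X_l] ≠ 0 in (Λ²ḡ*/B) ⊗ g. -/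

import Mathlib

/-- The wedge `α ∧ β` of two linear functionals, as a bilinear form. -/
noncomputable def wedgeDual (g : Type*) [LieRing g] [LieAlgebra ℂ g]
    (α β : Module.Dual ℂ g) : g →ₗ[ℂ] g →ₗ[ℂ] ℂ :=
  α.smulRight β - β.smulRight α

/-- The `k`-th term of the lower central series, as a submodule. -/
noncomputable def lcsSub (g : Type*) [LieRing g] [LieAlgebra ℂ g] (k : ℕ) : Submodule ℂ g :=
  LieSubmodule.toSubmodule (LieModule.lowerCentralSeries ℂ g g k)

section

attribute [local instance 100] LieRing.ofAssociativeRing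

/-- In a non-abelian Lie algebra, some pair of basis vectors has nonzero bracket. -/
lemma aux_exists_pair (g : Type*) [LieRing g] [LieAlgebra ℂ g]
    (hna : ¬IsLieAbelian g) (n : ℕ) (X : Module.Basis (Fin n) ℂ g) :
    ∃ k l : Fin n, k < l ∧ ⁅X k, X l⁆ ≠ 0 := by
  by_contra h
  push_neg at h
  apply hna
  have hb : ∀ k l : Fin n, ⁅X k, X l⁆ = 0 := by
    intro k l
    rcases lt_trichotomy k l with hkl | rfl | hkl
    · exact h k l hkl
    · exact lie_self _
    · have h0 := h l k hkl
      rw [← lie_skew, h0, neg_zero]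
  have hz : (LieModule.toEnd ℂ g g).toLinearMap = 0 := by
    apply X.ext; intro k
    apply X.ext; intro l
    simpa using hb k l
  constructor
  intro x y
  have := LinearMap.congr_fun (LinearMap.congr_fun hz x) y
  simpa using this

end

/-- A nonzero multiple of `W ⊗ Z` with `W ∉ B` and `Z ≠ 0` does not lie in `B ⊗ g`. -/
lemma aux_not_mem (g : Type*) [LieRing g] [LieAlgebra ℂ g] [FiniteDimensional ℂ g]
    (B : Submodule ℂ (g →ₗ[ℂ] g →ₗ[ℂ] ℂ)) (W : g →ₗ[ℂ] g →ₗ[ℂ] ℂ) (hW : W ∉ B)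
    (Z : g) (hZ : Z ≠ 0) (c : ℂ) (hc : c ≠ 0) :
    c • W.compr₂ (LinearMap.toSpanSingleton ℂ g Z) ∉
      Submodule.span ℂ {F : g →ₗ[ℂ] g →ₗ[ℂ] g | ∃ b ∈ B, ∃ Z' : g,
        F = b.compr₂ (LinearMap.toSpanSingleton ℂ g Z')} := by
  intro hmem
  obtain ⟨φ, hφ⟩ : ∃ φ : Module.Dual ℂ g, φ Z ≠ 0 := by
    by_contra h
    push_neg at h
    exact hZ ((Module.forall_dual_apply_eq_zero_iff ℂ Z).mp h)
  set Λ : (g →ₗ[ℂ] g →ₗ[ℂ] g) →ₗ[ℂ] (g →ₗ[ℂ] g →ₗ[ℂ] ℂ) :=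
    LinearMap.llcomp ℂ g (g →ₗ[ℂ] g) (g →ₗ[ℂ] ℂ) (LinearMap.llcomp ℂ g g ℂ φ) with hΛ
  have himg : Λ (c • W.compr₂ (LinearMap.toSpanSingleton ℂ g Z)) ∈ B := by
    have h1 := Submodule.mem_map_of_mem (f := Λ) hmem
    rw [Submodule.map_span] at h1
    refine Submodule.span_le.mpr ?_ h1
    rintro _ ⟨F, ⟨b, hb, Z', rfl⟩, rfl⟩
    have : Λ (b.compr₂ (LinearMap.toSpanSingleton ℂ g Z')) = (φ Z') • b := by
      ext u v
      simp [hΛ, LinearMap.compr₂_apply, LinearMap.toSpanSingleton_apply, mul_comm]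
    rw [this]
    exact B.smul_mem _ hb
  have heq : Λ (c • W.compr₂ (LinearMap.toSpanSingleton ℂ g Z)) = (c * φ Z) • W := by
    ext u v
    simp [hΛ, LinearMap.compr₂_apply, LinearMap.toSpanSingleton_apply]
    ring
  rw [heq] at himg
  have h2 := B.smul_mem (c * φ Z)⁻¹ himg
  rw [smul_smul, inv_mul_cancel₀ (mul_ne_zero hc hφ), one_smul] at h2
  exact hW h2

/-- Let `g` be non-abelian with basis `X₁,…,Xₙ`, let `ω̄¹,…,ω̄^m` be a basis of
the annihilator of `[g,g]`, and let `B ⊆ Λ²ḡ*` (realised as bilinear forms) be a subspace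
with `ω̄^i ∧ ω̄^j ∉ B` for some `i < j`. Then there are coefficients `t`, supported on
`{i,j} × {k,l}` for some `k < l` with `⁅X_k, X_l⁆ ≠ 0` and with nonzero `2×2`-determinant,
such that for `Φ₁ = Σ t_p^q ω̄^p ⊗ X_q` one has
`[Φ₁,Φ₁] = 2·det·ω̄^i∧ω̄^j ⊗ ⁅X_k,X_l⁆ ∉ B ⊗ g`. -/
theorem stmt15 (g : Type*) [LieRing g] [LieAlgebra ℂ g] [FiniteDimensional ℂ g]
    (hna : ¬IsLieAbelian g) (m n : ℕ) (X : Module.Basis (Fin n) ℂ g)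
    (ω : Fin m → Module.Dual ℂ g)
    (hω : LinearIndependent ℂ ω)
    (hωspan : Submodule.span ℂ (Set.range ω) = Submodule.dualAnnihilator (lcsSub g 1))
    (B : Submodule ℂ (g →ₗ[ℂ] g →ₗ[ℂ] ℂ))
    (i j : Fin m) (hij : i < j) (hW : wedgeDual g (ω i) (ω j) ∉ B) :
    ∃ (t : Fin m → Fin n → ℂ) (k l : Fin n), k < l ∧
      (∀ p q, ((p ≠ i ∧ p ≠ j) ∨ (q ≠ k ∧ q ≠ l)) → t p q = 0) ∧
      t i k * t j l - t j k * t i l ≠ 0 ∧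
      ⁅X k, X l⁆ ≠ 0 ∧
      (∀ u v : g,
        ⁅∑ p : Fin m, ∑ q : Fin n, (t p q * ω p u) • X q,
         ∑ p : Fin m, ∑ q : Fin n, (t p q * ω p v) • X q⁆
        - ⁅∑ p : Fin m, ∑ q : Fin n, (t p q * ω p v) • X q,
           ∑ p : Fin m, ∑ q : Fin n, (t p q * ω p u) • X q⁆
        = ((2 * (t i k * t j l - t j k * t i l)) * wedgeDual g (ω i) (ω j) u v) • ⁅X k, X l⁆) ∧
      (2 * (t i k * t j l - t j k * t i l)) •
          (wedgeDual g (ω i) (ω j)).compr₂ (LinearMap.toSpanSingleton ℂ g ⁅X k, X l⁆) ∉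
        Submodule.span ℂ {F : g →ₗ[ℂ] g →ₗ[ℂ] g | ∃ b ∈ B, ∃ Z : g,
          F = b.compr₂ (LinearMap.toSpanSingleton ℂ g Z)} := by
  obtain ⟨k, l, hkl, hZ⟩ := aux_exists_pair g hna n X
  have hij' : i ≠ j := ne_of_lt hij
  have hkl' : k ≠ l := ne_of_lt hkl
  set t : Fin m → Fin n → ℂ := fun p q =>
    if p = i ∧ q = k then 1 else if p = j ∧ q = l then 1 else 0 with ht
  have htik : t i k = 1 := by simp [ht]
  have htjl : t j l = 1 := by simp [ht, hij', hij'.symm, hkl', hkl'.symm]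
  have htjk : t j k = 0 := by simp [ht, hij', hij'.symm, hkl', hkl'.symm]
  have htil : t i l = 0 := by simp [ht, hij', hij'.symm, hkl', hkl'.symm]
  have hdet : t i k * t j l - t j k * t i l = 1 := by
    rw [htik, htjl, htjk, htil]; ring
  have hsum : ∀ w : g, (∑ p : Fin m, ∑ q : Fin n, (t p q * ω p w) • X q)
      = (ω i w) • X k + (ω j w) • X l := by
    intro w
    have inner : ∀ p : Fin m, (∑ q : Fin n, (t p q * ω p w) • X q)
        = (if p = i then (ω i w) • X k else 0) + (if p = j then (ω j w) • X l else 0) := by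
      intro p
      have hcalc : ∀ q : Fin n, (t p q * ω p w) • X q
          = (if p = i then (if q = k then (ω i w) • X k else 0) else 0)
            + (if p = j then (if q = l then (ω j w) • X l else 0) else 0) := by
        intro q
        by_cases hp : p = i <;> by_cases hp2 : p = j <;>
          by_cases hq : q = k <;> by_cases hq2 : q = l <;>
          subst_vars <;>
          first
          | exact absurd rfl hij'
          | simp [ht, hij', hij'.symm, hkl', hkl'.symm, *]
      rw [Finset.sum_congr rfl (fun q _ => hcalc q), Finset.sum_add_distrib]
      congr 1 <;> split_ifs <;> simp [Finset.sum_ite_eq']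
    rw [Finset.sum_congr rfl (fun p _ => inner p), Finset.sum_add_distrib]
    simp [Finset.sum_ite_eq', hij', hij'.symm]
  refine ⟨t, k, l, hkl, ?_, by rw [hdet]; norm_num, hZ, ?_, ?_⟩
  · rintro p q (⟨hp1, hp2⟩ | ⟨hq1, hq2⟩)
    · simp [ht, hp1, hp2]
    · simp [ht, hq1, hq2]
  · intro u v
    rw [hsum u, hsum v, htik, htjl, htjk, htil]
    simp only [wedgeDual, LinearMap.sub_apply, LinearMap.smulRight_apply,
      LinearMap.smul_apply, smul_eq_mul,
      add_lie, lie_add, smul_lie, lie_smul, lie_self, smul_zero, add_zero, zero_add,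
      ← lie_skew (X l) (X k)]
    module
  · rw [hdet, mul_one]
    exact aux_not_mem g B _ hW _ hZ 2 two_ne_zero
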